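/- The first DeWitt heat kernel coefficient on H^n is b₁(r) = ((n−1)/4)[(n−3)(1/r² − coth(r)/r) + n − 1], which is the unique solution of (1 + r ∂_r) b₁(r) = 𝒩·1 with 𝒩·1 = −Φ(r) where Φ(r) = −((n−1)/(4r²))[(n−3)(1 − r² coth² r) − 2r²]; moreover lim_{r→0⁺} b₁(r) = n(n−1)/6. -/

import Mathlib

open Real Filter Set Topology

lemma coth_hasDerivAt {r : ℝ} (hr : 0 < r) :
    HasDerivAt (fun x => Real.cosh x / Real.sinh x) (1 - (Real.cosh r / Real.sinh r)^2) r := by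
  have hs : Real.sinh r ≠ 0 := (Real.sinh_pos_iff.mpr hr).ne'
  have h2 := (Real.hasDerivAt_cosh r).div (Real.hasDerivAt_sinh r) hs
  refine h2.congr_deriv ?_
  have h := Real.cosh_sq_sub_sinh_sq r
  rw [div_pow, one_sub_div (pow_ne_zero 2 hs)]; congr 1
  nlinarith [h]

lemma sinh_div_self_tendsto : Tendsto (fun x => Real.sinh x / x) (𝓝[>] (0:ℝ)) (𝓝 1) := by
  have h := (Real.hasDerivAt_sinh 0)
  rw [hasDerivAt_iff_tendsto_slope] at h
  have h2 : Tendsto (slope Real.sinh 0) (𝓝[>] (0:ℝ)) (𝓝 (Real.cosh 0)) :=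
    h.mono_left (nhdsWithin_mono 0 (fun x hx => ne_of_gt hx))
  have h3 : (slope Real.sinh 0) = fun x => Real.sinh x / x := by
    funext x; simp [slope_def_field]
  rw [h3, Real.cosh_zero] at h2
  exact h2

lemma lim_core : Tendsto (fun r => (Real.sinh r - r*Real.cosh r)/r^3) (𝓝[>](0:ℝ)) (𝓝 (-(1/3))) := by
  apply HasDerivAt.lhopital_zero_right_on_Ioo (f' := fun x => -(x*Real.sinh x))
    (g' := fun x => 3*x^2) (one_pos : (0:ℝ) < 1)
  · intro x _
    have h := (Real.hasDerivAt_sinh x).sub ((hasDerivAt_id x).mul (Real.hasDerivAt_cosh x))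
    exact h.congr_deriv (by simp only [id]; ring)
  · intro x _
    have h := hasDerivAt_pow 3 x
    exact h.congr_deriv (by norm_num)
  · intro x hx
    have : (0:ℝ) < x := hx.1
    positivity
  · have hc : Continuous (fun x => Real.sinh x - x*Real.cosh x) := by continuity
    have := hc.tendsto 0
    simp only [Real.sinh_zero, Real.cosh_zero, zero_mul, mul_one, sub_zero] at this
    simpa using this.mono_left nhdsWithin_le_nhds
  · have hc : Continuous (fun x : ℝ => x^3) := by continuity
    have := hc.tendsto 0
    simpa using this.mono_left nhdsWithin_le_nhds
  · have h : Tendsto (fun x => -(Real.sinh x / x)/3) (𝓝[>](0:ℝ)) (𝓝 (-(1/3))) := by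
      have := (sinh_div_self_tendsto.neg).div_const 3
      norm_num at this ⊢
      exact this
    apply h.congr'
    filter_upwards [self_mem_nhdsWithin] with x hx
    have hx0 : (x:ℝ) ≠ 0 := ne_of_gt hx
    field_simp

lemma lim1 : Tendsto (fun r => 1/r^2 - (Real.cosh r/Real.sinh r)/r) (𝓝[>](0:ℝ)) (𝓝 (-(1/3))) := by
  have hB : Tendsto (fun r => r / Real.sinh r) (𝓝[>](0:ℝ)) (𝓝 1) := by
    have := sinh_div_self_tendsto.inv₀ one_ne_zero
    simpa [inv_div] using this
  have h := lim_core.mul hB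
  rw [neg_mul, mul_one] at h
  apply h.congr'
  filter_upwards [self_mem_nhdsWithin] with r hr
  have hr0 : (r:ℝ) ≠ 0 := ne_of_gt hr
  have hs : Real.sinh r ≠ 0 := (Real.sinh_pos_iff.mpr hr).ne'
  field_simp

theorem stmt_17 (n : ℕ) (hn : 2 ≤ n) :
    let Φ : ℝ → ℝ := fun r =>
      -(((n : ℝ) - 1) / (4 * r ^ 2)) *
        (((n : ℝ) - 3) * (1 - r ^ 2 * (Real.cosh r / Real.sinh r) ^ 2) - 2 * r ^ 2)
    let b₁ : ℝ → ℝ := fun r =>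
      (((n : ℝ) - 1) / 4) *
        (((n : ℝ) - 3) * (1 / r ^ 2 - (Real.cosh r / Real.sinh r) / r) + (n : ℝ) - 1)
    (∀ r > (0:ℝ), b₁ r + r * deriv b₁ r = Φ r) ∧
    (∀ c : ℝ → ℝ, (∀ r > (0:ℝ), DifferentiableAt ℝ c r) →
      (∀ r > (0:ℝ), c r + r * deriv c r = Φ r) →
      (∃ M : ℝ, ∀ r ∈ Set.Ioo (0:ℝ) 1, |c r| ≤ M) →
      ∀ r > (0:ℝ), c r = b₁ r) ∧
    Filter.Tendsto b₁ (nhdsWithin 0 (Set.Ioi 0))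
      (nhds ((n : ℝ) * ((n : ℝ) - 1) / 6)) := by
  intro Φ b₁
  -- derivative of b₁
  have hb1D : ∀ r : ℝ, 0 < r → HasDerivAt b₁
      ((((n:ℝ)-1)/4) * (((n:ℝ)-3) * (-(2*r)/((r^2)^2)
        - (((1-(Real.cosh r/Real.sinh r)^2)*r - (Real.cosh r/Real.sinh r)*1)/r^2)))) r := by
    intro r hr
    have hr0 : r ≠ 0 := ne_of_gt hr
    have h1 : HasDerivAt (fun x : ℝ => 1/x^2) (-(2*r)/((r^2)^2)) r := by
      have := (hasDerivAt_pow 2 r).inv (pow_ne_zero 2 hr0)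
      norm_num at this ⊢
      exact this
    have h2 : HasDerivAt (fun x => Real.cosh x / Real.sinh x / x)
        (((1-(Real.cosh r/Real.sinh r)^2)*r - (Real.cosh r/Real.sinh r)*1)/r^2) r :=
      (coth_hasDerivAt hr).div (hasDerivAt_id r) hr0
    have h3 := ((((h1.sub h2).const_mul ((n:ℝ)-3)).add_const ((n:ℝ))).sub_const 1).const_mul
      (((n:ℝ)-1)/4)
    exact h3
  have part1 : ∀ r > (0:ℝ), b₁ r + r * deriv b₁ r = Φ r := by
    intro r hr
    have hr0 : r ≠ 0 := ne_of_gt hr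
    have hs : Real.sinh r ≠ 0 := (Real.sinh_pos_iff.mpr hr).ne'
    rw [(hb1D r hr).deriv]
    show (((n : ℝ) - 1) / 4) *
        (((n : ℝ) - 3) * (1 / r ^ 2 - (Real.cosh r / Real.sinh r) / r) + (n : ℝ) - 1)
      + r * _ = _
    simp only [Φ]
    field_simp
    ring
  have part3 : Tendsto b₁ (𝓝[>] (0:ℝ)) (𝓝 ((n : ℝ) * ((n : ℝ) - 1) / 6)) := by
    have h := (((lim1.const_mul ((n:ℝ)-3)).add_const ((n:ℝ))).sub_const 1).const_mul
      (((n:ℝ)-1)/4)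
    have hval : (((n:ℝ)-1)/4) * (((n:ℝ)-3) * (-(1/3)) + (n:ℝ) - 1)
        = (n : ℝ) * ((n : ℝ) - 1) / 6 := by ring
    rw [hval] at h
    exact h
  refine ⟨part1, ?_, part3⟩
  intro c hc hode ⟨M, hM⟩ r hr
  set h : ℝ → ℝ := fun x => x * c x - x * b₁ x with hh
  have hder : ∀ x : ℝ, 0 < x → HasDerivAt h 0 x := by
    intro x hx
    have h1 : HasDerivAt (fun y => y * c y) (1 * c x + x * deriv c x) x :=
      (hasDerivAt_id x).mul ((hc x hx).hasDerivAt)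
    have h2 : HasDerivAt (fun y => y * b₁ y) (1 * b₁ x + x * deriv b₁ x) x := by
      have := (hasDerivAt_id x).mul (hb1D x hx)
      rwa [(hb1D x hx).deriv]
    have h3 := h1.sub h2
    have heq : (1 * c x + x * deriv c x) - (1 * b₁ x + x * deriv b₁ x) = 0 := by
      have e1 := hode x hx
      have e2 := part1 x hx
      rw [one_mul, one_mul]
      linarith [e1, e2]
    rw [heq] at h3
    exact h3
  have hconst : ∀ x : ℝ, 0 < x → h x = h r := by
    have key : ∀ a b : ℝ, 0 < a → a < b → h a = h b := by
      intro a b ha hab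
      obtain ⟨z, hz, hz2⟩ := exists_hasDerivAt_eq_slope h (fun _ => 0) hab
        (fun y hy => (hder y (lt_of_lt_of_le ha hy.1)).continuousAt.continuousWithinAt)
        (fun y hy => hder y (lt_trans ha hy.1))
      have hz3 : (0:ℝ) = (h b - h a)/(b - a) := hz2
      rw [eq_comm, div_eq_zero_iff] at hz3
      rcases hz3 with h' | h'
      · linarith [sub_eq_zero.mp h']
      · exact absurd h' (sub_ne_zero.mpr (ne_of_gt hab))
    intro x hx
    rcases lt_trichotomy x r with hlt | heq | hgt
    · exact key x r hx hlt
    · rw [heq]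
    · exact (key r x hr hgt).symm
  -- limit of h along 0+ is both h r and 0
  have hmem : Set.Ioo (0:ℝ) 1 ∈ 𝓝[>] (0:ℝ) := Ioo_mem_nhdsGT (by norm_num)
  have hid0 : Tendsto (fun x : ℝ => x) (𝓝[>] (0:ℝ)) (𝓝 0) :=
    tendsto_id.mono_left nhdsWithin_le_nhds
  have t1 : Tendsto (fun x => x * c x) (𝓝[>] (0:ℝ)) (𝓝 0) := by
    apply squeeze_zero_norm' (a := fun x => x * |M|)
    · filter_upwards [hmem, self_mem_nhdsWithin] with x hx hx'
      have := hM x hx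
      have hxpos : (0:ℝ) < x := hx'
      calc ‖x * c x‖ = x * |c x| := by
            rw [norm_mul, Real.norm_eq_abs, Real.norm_eq_abs, abs_of_pos hxpos]
        _ ≤ x * |M| := by
            apply mul_le_mul_of_nonneg_left _ hxpos.le
            exact this.trans (le_abs_self M)
    · simpa using hid0.mul_const |M|
  have t2 : Tendsto (fun x => x * b₁ x) (𝓝[>] (0:ℝ)) (𝓝 0) := by
    have := hid0.mul part3
    simpa using this
  have t3 : Tendsto h (𝓝[>] (0:ℝ)) (𝓝 0) := by
    have := t1.sub t2
    simpa using this
  have t4 : Tendsto h (𝓝[>] (0:ℝ)) (𝓝 (h r)) := by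
    apply Tendsto.congr' _ tendsto_const_nhds
    filter_upwards [self_mem_nhdsWithin] with x hx
    exact (hconst x hx).symm
  have hr0 : h r = 0 := tendsto_nhds_unique t4 t3
  have : r * c r - r * b₁ r = 0 := hr0
  have := sub_eq_zero.mp this
  exact mul_left_cancel₀ (ne_of_gt hr) this
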